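/- Let f : ℝⁿ → ℝ be convex and differentiable, with coordinate-wise L-Lipschitz continuous gradient, μ₁-strongly convex in the 1-norm (μ₁ > 0 with μ₁ < L), having ∇f L₁-Lipschitz continuous in the 1-norm, and with minimizer x*. Suppose at each iteration the coordinate i_k satisfies the additive-error condition |∇_{i_k}f(x^k)| ≥ ‖∇f(x^k)‖∞ − ε_k with ε_k ≥ 0, and x^{k+1} = x^k − (1/L)∇_{i_k}f(x^k)e_{i_k}. Then for every k, f(x^k) − f(x*) ≤ (1 − μ₁/L)^k [f(x⁰) − f(x*) + √(f(x⁰) − f(x*)) A_k], where A_k = (√(2L₁)/L) Σ_{i=1}^{k} (1 − μ₁/L)^{−i} ε_i. -/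

import Mathlib

open scoped RealInnerProductSpace

private lemma oneD_aux (g g' : ℝ → ℝ) (hg : ∀ t, HasDerivAt g (g' t) t) (C : ℝ)
    (h : ∀ t ∈ Set.Icc (0:ℝ) 1, |g' t - g' 0| ≤ C * t) :
    g 1 ≤ g 0 + g' 0 + C / 2 := by
  set φ : ℝ → ℝ := fun t => g t - t * g' 0 - C * t ^ 2 / 2 with hφdef
  have hφ' : ∀ t, HasDerivAt φ (g' t - g' 0 - C * t) t := by
    intro t
    have h1 : HasDerivAt (fun t : ℝ => t * g' 0) (g' 0) t := by
      simpa using (hasDerivAt_id t).mul_const (g' 0)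
    have h2 : HasDerivAt (fun t : ℝ => C * t ^ 2 / 2) (C * t) t := by
      have := ((hasDerivAt_pow 2 t).const_mul C).div_const 2
      simpa [mul_comm, mul_assoc, mul_div_assoc] using this
    exact ((hg t).sub h1).sub h2
  have hanti : AntitoneOn φ (Set.Icc 0 1) := by
    apply antitoneOn_of_deriv_nonpos (convex_Icc 0 1)
    · exact fun t _ => (hφ' t).continuousAt.continuousWithinAt
    · exact fun t _ => ((hφ' t).differentiableAt).differentiableWithinAt
    · intro t ht
      rw [interior_Icc] at ht
      rw [(hφ' t).deriv]
      have h3 := h t ⟨ht.1.le, ht.2.le⟩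
      linarith [le_abs_self (g' t - g' 0)]
  have h01 : (0:ℝ) ∈ Set.Icc (0:ℝ) 1 := by norm_num
  have h11 : (1:ℝ) ∈ Set.Icc (0:ℝ) 1 := by norm_num
  have := hanti h01 h11 zero_le_one
  simp only [hφdef] at this
  nlinarith [this]

private lemma coordStep_aux {n : ℕ} (f : EuclideanSpace ℝ (Fin n) → ℝ)
    (f' : EuclideanSpace ℝ (Fin n) → EuclideanSpace ℝ (Fin n))
    (hf : ∀ x, HasGradientAt f (f' x) x) (x : EuclideanSpace ℝ (Fin n))
    (j : Fin n) (β C : ℝ)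
    (h : ∀ t : ℝ, |f' (x + (t * β) • EuclideanSpace.single j 1) j - f' x j| ≤ C * |t * β|) :
    f (x + β • EuclideanSpace.single j 1) ≤ f x + β * f' x j + C * β ^ 2 / 2 := by
  set v : EuclideanSpace ℝ (Fin n) := EuclideanSpace.single j 1 with hv
  set c : ℝ → EuclideanSpace ℝ (Fin n) := fun t => x + (t * β) • v with hc
  have hcd : ∀ t, HasDerivAt c (β • v) t := by
    intro t
    have h1 : HasDerivAt (fun t : ℝ => t * β) β t := by
      simpa using (hasDerivAt_id t).mul_const β
    have h2 : HasDerivAt (fun s => x + (s * β) • v) (0 + β • v) t := (hasDerivAt_const t x).add (h1.smul_const v)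
    rw [zero_add] at h2
    exact h2
  have hgd : ∀ t, HasDerivAt (fun s => f (c s)) (β * f' (c t) j) t := by
    intro t
    have := ((hf (c t)).hasFDerivAt).comp_hasDerivAt t (hcd t)
    have hval : (InnerProductSpace.toDual ℝ (EuclideanSpace ℝ (Fin n))) (f' (c t)) (β • v)
        = β * f' (c t) j := by
      rw [InnerProductSpace.toDual_apply_apply, real_inner_smul_right, hv]
      rw [EuclideanSpace.inner_single_right]
      simp
    rw [hval] at this
    exact this
  have key := oneD_aux (fun s => f (c s)) (fun t => β * f' (c t) j) hgd (C * β ^ 2) ?_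
  · have e0 : c 0 = x := by simp [hc]
    have e1 : c 1 = x + β • v := by simp [hc]
    rw [e0, e1] at key
    simpa [mul_comm, mul_assoc] using key
  · intro t ht
    have e0 : c 0 = x := by simp [hc]
    show |β * f' (c t) j - β * f' (c 0) j| ≤ C * β ^ 2 * t
    rw [e0, ← mul_sub, abs_mul]
    have h2 : |f' (c t) j - f' x j| ≤ C * |t * β| := h t
    have h3 : |β| * |f' (c t) j - f' x j| ≤ |β| * (C * |t * β|) :=
      mul_le_mul_of_nonneg_left h2 (abs_nonneg β)
    have h4 : |t * β| = t * |β| := by rw [abs_mul, abs_of_nonneg ht.1]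
    have h5 : |β| * (C * |t * β|) = C * β ^ 2 * t := by
      rw [h4, show |β| * (C * (t * |β|)) = C * (|β| * |β|) * t by ring, ← sq, sq_abs]
    rw [← h5]; exact h3

private lemma single_sum_aux {n : ℕ} (s : ℝ) (j : Fin n) :
    ∑ i, |(s • (EuclideanSpace.single j 1 : EuclideanSpace ℝ (Fin n))) i| = |s| := by
  have h : ∀ i, |(s • (EuclideanSpace.single j 1 : EuclideanSpace ℝ (Fin n))) i|
      = if i = j then |s| else 0 := by
    intro i
    by_cases h : i = j <;> simp [h, EuclideanSpace.single_apply, PiLp.smul_apply]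
  rw [Finset.sum_congr rfl fun i _ => h i, Finset.sum_ite_eq' Finset.univ j fun _ => |s|]
  simp

set_option maxHeartbeats 1000000 in
/-- convergence of approximate Gauss-Southwell with additive
errors, with the error term expressed via the 1-norm Lipschitz constant `L₁`. -/
theorem approx_gauss_southwell_additive_L1 {n : ℕ}
    (f : EuclideanSpace ℝ (Fin n) → ℝ)
    (hconv : ConvexOn ℝ Set.univ f)
    (f' : EuclideanSpace ℝ (Fin n) → EuclideanSpace ℝ (Fin n))
    (hf : ∀ x, HasGradientAt f (f' x) x)
    (L : ℝ) (hL : 0 < L)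
    (hlip : ∀ (x : EuclideanSpace ℝ (Fin n)) (α : ℝ) (i : Fin n),
      |f' (x + α • EuclideanSpace.single i 1) i - f' x i| ≤ L * |α|)
    (μ₁ : ℝ) (hμ₁ : 0 < μ₁) (hμ₁L : μ₁ < L)
    (hsc : ∀ x y, f y ≥ f x + ⟪f' x, y - x⟫ + μ₁ / 2 * (∑ i, |y i - x i|) ^ 2)
    (L₁ : ℝ) (hL₁ : 0 < L₁)
    (hlip1 : ∀ x y : EuclideanSpace ℝ (Fin n),
      (⨆ i, |f' x i - f' y i|) ≤ L₁ * ∑ i, |x i - y i|)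
    (xs : EuclideanSpace ℝ (Fin n)) (hxs : ∀ y, f xs ≤ f y)
    (x : ℕ → EuclideanSpace ℝ (Fin n)) (ik : ℕ → Fin n)
    (ε : ℕ → ℝ) (hε : ∀ k, 0 ≤ ε k)
    (hrule : ∀ k, |f' (x k) (ik k)| ≥ (⨆ j, |f' (x k) j|) - ε (k + 1))
    (hstep : ∀ k, x (k + 1)
      = x k - ((1 / L) * f' (x k) (ik k)) • EuclideanSpace.single (ik k) 1) :
    ∀ k : ℕ, f (x k) - f xs ≤ (1 - μ₁ / L) ^ k *
      (f (x 0) - f xs + Real.sqrt (f (x 0) - f xs) *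
        (Real.sqrt (2 * L₁) / L
          * ∑ i ∈ Finset.Icc 1 k, ((1 - μ₁ / L) ^ i)⁻¹ * ε i)) := by
  rcases Nat.eq_zero_or_pos n with hn | hn
  · -- trivial case: the space is a point
    subst hn
    have hxx : ∀ u : EuclideanSpace ℝ (Fin 0), u = xs := fun u => PiLp.ext fun i => i.elim0
    intro k
    rw [hxx (x k), hxx (x 0)]
    simp
  haveI : Nonempty (Fin n) := ⟨⟨0, hn⟩⟩
  set A : EuclideanSpace ℝ (Fin n) → ℝ := fun y => ⨆ j, |f' y j| with hA
  have hAle : ∀ y j, |f' y j| ≤ A y := fun y j =>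
    le_ciSup (f := fun i => |f' y i|) (Set.Finite.bddAbove (Set.finite_range _)) j
  have hA0 : ∀ y, 0 ≤ A y :=
    fun y => le_trans (abs_nonneg _) (hAle y (Classical.arbitrary _))
  -- Hölder inequality
  have hinner : ∀ y d : EuclideanSpace ℝ (Fin n), |⟪f' y, d⟫| ≤ A y * ∑ i, |d i| := by
    intro y d
    have h1 : ⟪f' y, d⟫ = ∑ i, f' y i * d i := by
      simp [PiLp.inner_apply, RCLike.inner_apply, conj_trivial, mul_comm]
    rw [h1]
    calc |∑ i, f' y i * d i| ≤ ∑ i, |f' y i * d i| := Finset.abs_sum_le_sum_abs _ _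
      _ ≤ ∑ i, A y * |d i| := Finset.sum_le_sum fun i _ => by
          rw [abs_mul]
          exact mul_le_mul_of_nonneg_right (hAle y i) (abs_nonneg _)
      _ = A y * ∑ i, |d i| := by rw [Finset.mul_sum]
  -- upper bound on gradient sup-norm via suboptimality (uses L₁ smoothness)
  have hC : ∀ y, (A y) ^ 2 ≤ 2 * L₁ * (f y - f xs) := by
    intro y
    obtain ⟨j, hj⟩ := Finite.exists_max fun i => |f' y i|
    have hAj : A y = |f' y j| := le_antisymm (ciSup_le hj) (hAle y j)
    set β : ℝ := -(f' y j) / L₁ with hβ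
    have harg : ∀ t : ℝ, |f' (y + (t * β) • EuclideanSpace.single j 1) j - f' y j|
        ≤ L₁ * |t * β| := by
      intro t
      have h1 := hlip1 (y + (t * β) • EuclideanSpace.single j 1) y
      have h2 : |f' (y + (t * β) • EuclideanSpace.single j 1) j - f' y j|
          ≤ ⨆ i, |f' (y + (t * β) • EuclideanSpace.single j 1) i - f' y i| :=
        le_ciSup (f := fun i => |f' (y + (t * β) • EuclideanSpace.single j 1) i - f' y i|)
          (Set.Finite.bddAbove (Set.finite_range _)) j
      have h3 : ∑ i, |(y + (t * β) • EuclideanSpace.single j 1 :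
          EuclideanSpace ℝ (Fin n)) i - y i| = |t * β| := by
        simp only [PiLp.add_apply, add_sub_cancel_left]
        exact single_sum_aux (t * β) j
      rw [h3] at h1
      exact h2.trans h1
    have hstep' := coordStep_aux f f' hf y j β L₁ harg
    have hmin := hxs (y + β • EuclideanSpace.single j 1)
    have he : β * f' y j + L₁ * β ^ 2 / 2 = -((f' y j) ^ 2 / (2 * L₁)) := by
      rw [hβ]; field_simp; ring
    have h4 : f xs ≤ f y - (f' y j) ^ 2 / (2 * L₁) := by
      linarith [hmin, hstep', he]
    have h5 : (f' y j) ^ 2 / (2 * L₁) ≤ f y - f xs := by linarith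
    have h6 : (f' y j) ^ 2 ≤ 2 * L₁ * (f y - f xs) := by
      rw [div_le_iff₀ (by positivity)] at h5; linarith [h5]
    rw [hAj, sq_abs]
    exact h6
  -- lower bound on gradient sup-norm via strong convexity
  have hD : ∀ y, 2 * μ₁ * (f y - f xs) ≤ (A y) ^ 2 := by
    intro y
    have h1 := hsc y xs
    set S : ℝ := ∑ i, |xs i - y i| with hS
    have hS0 : 0 ≤ S := Finset.sum_nonneg fun i _ => abs_nonneg _
    have h2 : -(A y * S) ≤ ⟪f' y, xs - y⟫ := by
      have := hinner y (xs - y)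
      have hsum : ∑ i, |(xs - y) i| = S := by
        rw [hS]; exact Finset.sum_congr rfl fun i _ => by rw [PiLp.sub_apply]
      rw [hsum] at this
      linarith [neg_abs_le ⟪f' y, xs - y⟫]
    have h3 : f xs ≥ f y - A y * S + μ₁ / 2 * S ^ 2 := by linarith
    nlinarith [sq_nonneg (A y - μ₁ * S), hμ₁]
  -- descent lemma
  have hdesc : ∀ k, f (x (k + 1)) ≤ f (x k) - (f' (x k) (ik k)) ^ 2 / (2 * L) := by
    intro k
    set g : ℝ := f' (x k) (ik k) with hg
    set β : ℝ := -((1 / L) * g) with hβ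
    have hx1 : x (k + 1) = x k + β • EuclideanSpace.single (ik k) 1 := by
      rw [hstep k, hβ, neg_smul, sub_eq_add_neg]
    have harg : ∀ t : ℝ, |f' (x k + (t * β) • EuclideanSpace.single (ik k) 1) (ik k)
        - f' (x k) (ik k)| ≤ L * |t * β| := fun t => hlip (x k) (t * β) (ik k)
    have h1 := coordStep_aux f f' hf (x k) (ik k) β L harg
    have he : β * g + L * β ^ 2 / 2 = -(g ^ 2 / (2 * L)) := by
      rw [hβ]; field_simp; ring
    rw [← hx1] at h1
    linarith [h1, he]
  have hΔ0 : ∀ k, 0 ≤ f (x k) - f xs := fun k => sub_nonneg.2 (hxs _)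
  have hmono : ∀ k, f (x (k + 1)) ≤ f (x k) := by
    intro k
    have h1 := hdesc k
    have h2 : 0 ≤ (f' (x k) (ik k)) ^ 2 / (2 * L) := by positivity
    linarith
  have hle0 : ∀ k, f (x k) ≤ f (x 0) := by
    intro k
    induction k with
    | zero => exact le_rfl
    | succ k ih => exact (hmono k).trans ih
  -- one-step recursion
  set c : ℝ := Real.sqrt (2 * L₁) / L with hc
  have hc0 : 0 ≤ c := by positivity
  have hrec : ∀ k, f (x (k + 1)) - f xs ≤ (1 - μ₁ / L) * (f (x k) - f xs)
      + c * ε (k + 1) * Real.sqrt (f (x k) - f xs) := by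
    intro k
    set g : ℝ := f' (x k) (ik k) with hg
    set a : ℝ := A (x k) with ha
    set e : ℝ := ε (k + 1) with heps
    set Δ : ℝ := f (x k) - f xs with hΔ
    have ha0 : 0 ≤ a := hA0 (x k)
    have he0 : 0 ≤ e := hε (k + 1)
    have hΔnn : 0 ≤ Δ := hΔ0 k
    have hg2 : a ^ 2 - 2 * a * e ≤ g ^ 2 := by
      have h1 : a - e ≤ |g| := hrule k
      rcases le_or_gt e a with h | h
      · nlinarith [sq_abs g, abs_nonneg g]
      · nlinarith [sq_nonneg g, mul_nonneg ha0 (by linarith : (0:ℝ) ≤ 2 * e - a)]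
    have hasqrt : a ≤ Real.sqrt (2 * L₁) * Real.sqrt Δ := by
      calc a = Real.sqrt (a ^ 2) := (Real.sqrt_sq ha0).symm
        _ ≤ Real.sqrt (2 * L₁ * Δ) := Real.sqrt_le_sqrt (hC (x k))
        _ = Real.sqrt (2 * L₁) * Real.sqrt Δ := Real.sqrt_mul (by positivity) Δ
    have hDk : 2 * μ₁ * Δ ≤ a ^ 2 := hD (x k)
    calc f (x (k + 1)) - f xs ≤ Δ - g ^ 2 / (2 * L) := by linarith [hdesc k]
      _ ≤ Δ - (a ^ 2 - 2 * a * e) / (2 * L) := by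
          have := (div_le_div_iff_of_pos_right (by positivity : (0:ℝ) < 2 * L)).mpr hg2
          linarith
      _ = Δ - a ^ 2 / (2 * L) + a * e / L := by field_simp; ring
      _ ≤ Δ - (2 * μ₁ * Δ) / (2 * L) + a * e / L := by
          have := (div_le_div_iff_of_pos_right (by positivity : (0:ℝ) < 2 * L)).mpr hDk
          linarith
      _ ≤ Δ - (2 * μ₁ * Δ) / (2 * L) + (Real.sqrt (2 * L₁) * Real.sqrt Δ) * e / L := by
          have h1 : a * e ≤ (Real.sqrt (2 * L₁) * Real.sqrt Δ) * e :=
            mul_le_mul_of_nonneg_right hasqrt he0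
          have := (div_le_div_iff_of_pos_right hL).mpr h1
          linarith
      _ = (1 - μ₁ / L) * Δ + c * e * Real.sqrt Δ := by
          rw [hc]; field_simp
  -- main induction
  set ρ : ℝ := 1 - μ₁ / L with hρ
  have hρpos : 0 < ρ := by
    rw [hρ]
    have : μ₁ / L < 1 := (div_lt_one hL).mpr hμ₁L
    linarith
  set Δ0 : ℝ := f (x 0) - f xs with hΔ0def
  have hsΔ0 : 0 ≤ Δ0 := hΔ0 0
  intro k
  induction k with
  | zero => simp; linarith
  | succ k ih =>
    have hsq : Real.sqrt (f (x k) - f xs) ≤ Real.sqrt Δ0 :=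
      Real.sqrt_le_sqrt (by rw [hΔ0def]; linarith [hle0 k])
    have step1 : f (x (k + 1)) - f xs ≤ ρ * (ρ ^ k * (Δ0 + Real.sqrt Δ0 *
        (c * ∑ i ∈ Finset.Icc 1 k, (ρ ^ i)⁻¹ * ε i))) + c * ε (k + 1) * Real.sqrt Δ0 := by
      calc f (x (k + 1)) - f xs
          ≤ ρ * (f (x k) - f xs) + c * ε (k + 1) * Real.sqrt (f (x k) - f xs) := hrec k
        _ ≤ _ := add_le_add (mul_le_mul_of_nonneg_left ih hρpos.le)
            (mul_le_mul_of_nonneg_left hsq (mul_nonneg hc0 (hε (k + 1))))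
    refine step1.trans (le_of_eq ?_)
    rw [Finset.sum_Icc_succ_top (Nat.le_add_left 1 k)]
    have hne : ρ ^ (k + 1) ≠ 0 := pow_ne_zero _ hρpos.ne'
    field_simp
    ring
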